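/- Fix an integer m ≥ 1, a configuration ξ_0 ∈ {0,1,2}^{ℤ²}, and a finite nonempty set Z ⊂ ℤ² satisfying: (PR1) every u ∈ Z with at least two nearest neighbors in Z^c has all but one of those Z^c-neighbors being vertices that remain in state 0 forever in the full dynamics; (PR2) for each u ∈ Z with a neighbor in Z^c, every v ∈ Z within ℓ∞-distance m of u has ξ_0(v) ≤ 1; and (PR3) the internal dynamics on Z, started from ξ_0 with all 0s in Z replaced by 1s, produces no connected set of state-2 vertices in Z of ℓ∞-diameter larger than m/2 in its final configuration. Run the full modified two-stage dynamics ξ_t on ℤ² and the internal dynamics ξ_t^Z on Z. Then for every t ≥ 0 and every u ∈ Z: if ξ_t(u) = 2 then ξ_t^Z(u) = 2. -/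

import Mathlib

/-- The four nearest neighbors of a vertex of `ℤ²`. -/
def neighbors (v : ℤ × ℤ) : List (ℤ × ℤ) :=
  [(v.1 + 1, v.2), (v.1 - 1, v.2), (v.1, v.2 + 1), (v.1, v.2 - 1)]

/-- One step of the modified two-stage bootstrap percolation on `ℤ²`. -/
def mstep (ξ : ℤ × ℤ → Fin 3) : ℤ × ℤ → Fin 3 := fun v =>
  if ξ v = 0 then
    (if (ξ (v.1 + 1, v.2) = 1 ∨ ξ (v.1 - 1, v.2) = 1) ∧
        (ξ (v.1, v.2 + 1) = 1 ∨ ξ (v.1, v.2 - 1) = 1) then 1 else 0)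
  else if ξ v = 1 then
    (if 2 ≤ (neighbors v).countP (fun w => decide (ξ w = 2)) then 2 else 1)
  else 2

/-- One step of the modified dynamics internal to `Z` (neighborhoods restricted to `Z`). -/
def mstepIn (Z : Finset (ℤ × ℤ)) (ξ : ℤ × ℤ → Fin 3) : ℤ × ℤ → Fin 3 := fun v =>
  if ξ v = 0 then
    (if (((v.1 + 1, v.2) ∈ Z ∧ ξ (v.1 + 1, v.2) = 1) ∨
          ((v.1 - 1, v.2) ∈ Z ∧ ξ (v.1 - 1, v.2) = 1)) ∧
        (((v.1, v.2 + 1) ∈ Z ∧ ξ (v.1, v.2 + 1) = 1) ∨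
          ((v.1, v.2 - 1) ∈ Z ∧ ξ (v.1, v.2 - 1) = 1)) then 1 else 0)
  else if ξ v = 1 then
    (if 2 ≤ (neighbors v).countP (fun w => decide (w ∈ Z) && decide (ξ w = 2)) then 2
     else 1)
  else 2

/-- The initial configuration of the internal dynamics on `Z`: all 0s replaced by 1s. -/
def initZ (ξ0 : ℤ × ℤ → Fin 3) : ℤ × ℤ → Fin 3 := fun v => if ξ0 v = 0 then 1 else ξ0 v

/-- Nearest-neighbor adjacency in `ℤ²`. -/
def Adj (u v : ℤ × ℤ) : Prop := (u.1 - v.1).natAbs + (u.2 - v.2).natAbs = 1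

/-- A finite set is connected for nearest-neighbor adjacency. -/
def ConnectedIn (C : Finset (ℤ × ℤ)) : Prop :=
  ∀ u ∈ C, ∀ v ∈ C, ∃ l : List (ℤ × ℤ), (∀ w ∈ l, w ∈ C) ∧ List.Chain Adj u l ∧
    (u :: l).getLast (by simp) = v



lemma fin3 (x : Fin 3) : x = 0 ∨ x = 1 ∨ x = 2 := by
  rcases x with ⟨n, hn⟩
  interval_cases n <;> simp [Fin.ext_iff]

lemma neighbors_nodup (v : ℤ × ℤ) : (neighbors v).Nodup := by
  simp [neighbors, Prod.ext_iff]
  omega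

lemma adj_of_mem {v w : ℤ × ℤ} (h : w ∈ neighbors v) : Adj v w := by
  simp [neighbors] at h
  rcases h with h | h | h | h <;> subst h <;> simp [Adj]

lemma dist_le_one {v w : ℤ × ℤ} (h : w ∈ neighbors v) :
    max (v.1 - w.1).natAbs (v.2 - w.2).natAbs ≤ 1 := by
  simp [neighbors] at h
  rcases h with h | h | h | h <;> subst h <;> simp <;> omega

lemma exists_two {l : List (ℤ × ℤ)} (hnd : l.Nodup) {p : ℤ × ℤ → Bool}
    (h : 2 ≤ l.countP p) :
    ∃ a ∈ l, ∃ b ∈ l, a ≠ b ∧ p a ∧ p b := by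
  rw [List.countP_eq_length_filter] at h
  have hnd' := hnd.filter p
  obtain ⟨a, b, rest, hf⟩ : ∃ a b rest, l.filter p = a :: b :: rest := by
    match hl : l.filter p with
    | [] => rw [hl] at h; simp at h
    | [a] => rw [hl] at h; simp at h
    | a :: b :: r => exact ⟨a, b, r, rfl⟩
  rw [hf] at hnd'
  have ha : a ∈ l.filter p := by rw [hf]; simp
  have hb : b ∈ l.filter p := by rw [hf]; simp
  have hab : a ≠ b := by
    rcases List.nodup_cons.1 hnd' with ⟨hna, _⟩
    exact fun he => hna (he ▸ (List.mem_cons_self : b ∈ b :: rest))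
  exact ⟨a, (List.mem_filter.1 ha).1, b, (List.mem_filter.1 hb).1, hab,
    (List.mem_filter.1 ha).2, (List.mem_filter.1 hb).2⟩

lemma two_le_countP {l : List (ℤ × ℤ)} {p : ℤ × ℤ → Bool} {a b : ℤ × ℤ}
    (ha : a ∈ l) (hb : b ∈ l) (hab : a ≠ b) (hpa : p a = true) (hpb : p b = true) :
    2 ≤ l.countP p := by
  rw [List.countP_eq_length_filter]
  have hsub : ({a, b} : Finset (ℤ × ℤ)) ⊆ (l.filter p).toFinset := by
    intro x hx
    simp at hx
    rcases hx with rfl | rfl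
    · exact List.mem_toFinset.2 (List.mem_filter.2 ⟨ha, hpa⟩)
    · exact List.mem_toFinset.2 (List.mem_filter.2 ⟨hb, hpb⟩)
  calc 2 = ({a, b} : Finset (ℤ × ℤ)).card := (Finset.card_pair hab).symm
    _ ≤ (l.filter p).toFinset.card := Finset.card_le_card hsub
    _ ≤ (l.filter p).length := List.toFinset_card_le _

lemma adj_symm {u v : ℤ × ℤ} (h : Adj u v) : Adj v u := by
  simp [Adj] at *; omega

lemma tri (a b c : ℤ × ℤ) :
    max (a.1 - c.1).natAbs (a.2 - c.2).natAbs ≤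
      max (a.1 - b.1).natAbs (a.2 - b.2).natAbs +
      max (b.1 - c.1).natAbs (b.2 - c.2).natAbs := by
  apply max_le
  · calc (a.1 - c.1).natAbs ≤ (a.1 - b.1).natAbs + (b.1 - c.1).natAbs := by omega
      _ ≤ _ := Nat.add_le_add (le_max_left _ _) (le_max_left _ _)
  · calc (a.2 - c.2).natAbs ≤ (a.2 - b.2).natAbs + (b.2 - c.2).natAbs := by omega
      _ ≤ _ := Nat.add_le_add (le_max_right _ _) (le_max_right _ _)
def Reach (C : Finset (ℤ × ℤ)) (u v : ℤ × ℤ) : Prop :=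
  ∃ l : List (ℤ × ℤ), (∀ w ∈ l, w ∈ C) ∧ List.Chain Adj u l ∧
    (u :: l).getLast (by simp) = v

lemma reach_refl (C : Finset (ℤ × ℤ)) (a : ℤ × ℤ) : Reach C a a :=
  ⟨[], by simp, List.Chain.nil, by simp⟩

lemma reach_cons {C : Finset (ℤ × ℤ)} {a b v : ℤ × ℤ}
    (hab : Adj a b) (hb : b ∈ C) (h : Reach C b v) : Reach C a v := by
  obtain ⟨l, hl, hc, hlast⟩ := h
  refine ⟨b :: l, ?_, List.Chain.cons hab hc, ?_⟩
  · intro w hw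
    rcases List.mem_cons.1 hw with rfl | hw
    · exact hb
    · exact hl w hw
  · rw [List.getLast_cons (List.cons_ne_nil _ _)]
    exact hlast

lemma reach_trans' {C : Finset (ℤ × ℤ)} :
    ∀ (l : List (ℤ × ℤ)) (u v w : ℤ × ℤ), (∀ x ∈ l, x ∈ C) → List.Chain Adj u l →
      (u :: l).getLast (by simp) = v → Reach C v w → Reach C u w := by
  intro l
  induction l with
  | nil =>
    intro u v w _ _ hlast hr
    simp at hlast
    exact hlast ▸ hr
  | cons a l IH =>
    intro u v w hmem hc hlast hr
    rcases List.chain_cons.1 hc with ⟨hua, hc'⟩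
    rw [List.getLast_cons (List.cons_ne_nil _ _)] at hlast
    exact reach_cons hua (hmem a (by simp)) (IH a v w (fun x hx => hmem x (by simp [hx])) hc' hlast hr)

lemma reach_trans {C : Finset (ℤ × ℤ)} {u v w : ℤ × ℤ}
    (h1 : Reach C u v) (h2 : Reach C v w) : Reach C u w := by
  obtain ⟨l, hl, hc, hlast⟩ := h1
  exact reach_trans' l u v w hl hc hlast h2

lemma reach_snoc {C : Finset (ℤ × ℤ)} {v a u : ℤ × ℤ}
    (h : Reach C v a) (hau : Adj a u) (hu : u ∈ C) : Reach C v u :=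
  reach_trans h ⟨[u], by simpa using hu, List.chain_cons.2 ⟨hau, List.Chain.nil⟩, by simp⟩

lemma reach_symm {C : Finset (ℤ × ℤ)} :
    ∀ (l : List (ℤ × ℤ)) (u v : ℤ × ℤ), u ∈ C → (∀ x ∈ l, x ∈ C) → List.Chain Adj u l →
      (u :: l).getLast (by simp) = v → Reach C v u := by
  intro l
  induction l with
  | nil =>
    intro u v hu _ _ hlast
    simp at hlast
    exact hlast ▸ reach_refl C u
  | cons a l IH =>
    intro u v hu hmem hc hlast
    rcases List.chain_cons.1 hc with ⟨hua, hc'⟩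
    rw [List.getLast_cons (List.cons_ne_nil _ _)] at hlast
    have := IH a v (hmem a (by simp)) (fun x hx => hmem x (by simp [hx])) hc' hlast
    exact reach_snoc this (adj_symm hua) hu

lemma chain_head_reach {C : Finset (ℤ × ℤ)} :
    ∀ (l : List (ℤ × ℤ)) (a : ℤ × ℤ), (∀ x ∈ a :: l, x ∈ C) → List.Chain Adj a l →
      ∀ x ∈ a :: l, Reach C a x := by
  intro l
  induction l with
  | nil =>
    intro a _ _ x hx
    simp at hx
    exact hx ▸ reach_refl C a
  | cons b l IH =>
    intro a hmem hc x hx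
    rcases List.chain_cons.1 hc with ⟨hab, hc'⟩
    rcases List.mem_cons.1 hx with rfl | hx
    · exact reach_refl C x
    · exact reach_cons hab (hmem b (by simp))
        (IH b (fun y hy => hmem y (List.mem_cons_of_mem a hy)) hc' x hx)

lemma connectedIn_of_chain {a : ℤ × ℤ} {l : List (ℤ × ℤ)} (hc : List.Chain Adj a l) :
    ConnectedIn (a :: l).toFinset := by
  intro u hu v hv
  have hsub : ∀ x ∈ a :: l, x ∈ (a :: l).toFinset := fun x hx => List.mem_toFinset.2 hx
  have ru := chain_head_reach l a hsub hc u (List.mem_toFinset.1 hu)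
  have rv := chain_head_reach l a hsub hc v (List.mem_toFinset.1 hv)
  obtain ⟨l', h1, h2, h3⟩ := ru
  exact reach_trans (reach_symm l' a u (hsub a (by simp)) h1 h2 h3) rv
lemma mstep_persist {ξ : ℤ × ℤ → Fin 3} {v : ℤ × ℤ} (h : ξ v = 2) : mstep ξ v = 2 := by
  simp [mstep, h]

lemma mstepIn_persist {Z : Finset (ℤ × ℤ)} {ξ : ℤ × ℤ → Fin 3} {v : ℤ × ℤ}
    (h : ξ v = 2) : mstepIn Z ξ v = 2 := by
  simp [mstepIn, h]

lemma mstepIn_ne_zero {Z : Finset (ℤ × ℤ)} {ξ : ℤ × ℤ → Fin 3} {v : ℤ × ℤ}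
    (h : ξ v ≠ 0) : mstepIn Z ξ v ≠ 0 := by
  rcases fin3 (ξ v) with h0 | h1 | h2
  · exact absurd h0 h
  · rw [mstepIn, if_neg (by rw [h1]; decide), if_pos h1]
    split <;> decide
  · rw [mstepIn, if_neg (by rw [h2]; decide), if_neg (by rw [h2]; decide)]
    decide

lemma initZ_ne_zero (ξ0 : ℤ × ℤ → Fin 3) (v : ℤ × ℤ) : initZ ξ0 v ≠ 0 := by
  rcases fin3 (ξ0 v) with h | h | h <;> simp [initZ, h]

lemma internal_ne_zero (Z : Finset (ℤ × ℤ)) (ξ0 : ℤ × ℤ → Fin 3) (t : ℕ) (v : ℤ × ℤ) :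
    (mstepIn Z)^[t] (initZ ξ0) v ≠ 0 := by
  induction t generalizing v with
  | zero => exact initZ_ne_zero ξ0 v
  | succ s IH =>
    rw [Function.iterate_succ_apply']
    exact mstepIn_ne_zero (IH v)

lemma internal_persist (Z : Finset (ℤ × ℤ)) (ξ0 : ℤ × ℤ → Fin 3) {s : ℕ} {v : ℤ × ℤ}
    (h : (mstepIn Z)^[s] (initZ ξ0) v = 2) (t : ℕ) (hst : s ≤ t) :
    (mstepIn Z)^[t] (initZ ξ0) v = 2 := by
  induction t with
  | zero => exact (Nat.le_zero.1 hst) ▸ h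
  | succ n IH =>
    by_cases hs : s = n + 1
    · subst hs; exact h
    · rw [Function.iterate_succ_apply']
      exact mstepIn_persist (IH (by omega))

lemma path_lemma (ξ0 : ℤ × ℤ → Fin 3) (Z : Finset (ℤ × ℤ))
    (PR1 : ∀ u ∈ Z, ∀ w1 ∈ neighbors u, ∀ w2 ∈ neighbors u, w1 ≠ w2 →
      w1 ∉ Z → w2 ∉ Z →
      (∀ t : ℕ, mstep^[t] ξ0 w1 = 0) ∨ (∀ t : ℕ, mstep^[t] ξ0 w2 = 0)) :
    ∀ s : ℕ, ∀ v ∈ Z, mstep^[s] ξ0 v = 2 →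
      ∃ l : List (ℤ × ℤ), (∀ w ∈ v :: l, w ∈ Z ∧ mstep^[s] ξ0 w = 2) ∧
        List.Chain Adj v l ∧ ξ0 ((v :: l).getLast (by simp)) = 2 := by
  intro s
  induction s with
  | zero =>
    intro v hv h
    exact ⟨[], by simpa [hv] using h, List.Chain.nil, by simpa using h⟩
  | succ s IH =>
    intro v hv h
    have h' := h
    rw [Function.iterate_succ_apply'] at h'
    rcases fin3 (mstep^[s] ξ0 v) with h0 | h1 | h2
    · exfalso
      rw [mstep, if_pos h0] at h'
      revert h'; split <;> decide
    · rw [mstep, if_neg (by rw [h1]; decide), if_pos h1] at h'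
      have hcount : 2 ≤ (neighbors v).countP (fun w => decide (mstep^[s] ξ0 w = 2)) := by
        by_contra hc
        rw [if_neg hc] at h'
        exact absurd h' (by decide)
      obtain ⟨w1, hw1m, w2, hw2m, hne, hp1, hp2⟩ := exists_two (neighbors_nodup v) hcount
      have hx1 : mstep^[s] ξ0 w1 = 2 := by simpa using hp1
      have hx2 : mstep^[s] ξ0 w2 = 2 := by simpa using hp2
      have hZw : ∃ w ∈ neighbors v, w ∈ Z ∧ mstep^[s] ξ0 w = 2 := by
        by_cases hz1 : w1 ∈ Z
        · exact ⟨w1, hw1m, hz1, hx1⟩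
        by_cases hz2 : w2 ∈ Z
        · exact ⟨w2, hw2m, hz2, hx2⟩
        rcases PR1 v hv w1 hw1m w2 hw2m hne hz1 hz2 with h0' | h0'
        · rw [h0' s] at hx1; exact absurd hx1 (by decide)
        · rw [h0' s] at hx2; exact absurd hx2 (by decide)
      obtain ⟨w, hwm, hwZ, hw2⟩ := hZw
      obtain ⟨l, hl, hc, hlast⟩ := IH w hwZ hw2
      refine ⟨w :: l, ?_, List.Chain.cons (adj_of_mem hwm) hc, ?_⟩
      · intro y hy
        rcases List.mem_cons.1 hy with rfl | hy
        · exact ⟨hv, h⟩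
        · obtain ⟨hyZ, hy2⟩ := hl y hy
          exact ⟨hyZ, by rw [Function.iterate_succ_apply']; exact mstep_persist hy2⟩
      · rw [List.getLast_cons (List.cons_ne_nil _ _)]
        exact hlast
    · obtain ⟨l, hl, hc, hlast⟩ := IH v hv h2
      exact ⟨l, fun w hw => ⟨(hl w hw).1,
        by rw [Function.iterate_succ_apply']; exact mstep_persist (hl w hw).2⟩, hc, hlast⟩

lemma boundary_contra (m : ℕ) (hm : 1 ≤ m) (ξ0 : ℤ × ℤ → Fin 3)
    (Z : Finset (ℤ × ℤ))
    (PR1 : ∀ u ∈ Z, ∀ w1 ∈ neighbors u, ∀ w2 ∈ neighbors u, w1 ≠ w2 →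
      w1 ∉ Z → w2 ∉ Z →
      (∀ t : ℕ, mstep^[t] ξ0 w1 = 0) ∨ (∀ t : ℕ, mstep^[t] ξ0 w2 = 0))
    (PR2 : ∀ u ∈ Z, (∃ w ∈ neighbors u, w ∉ Z) → ∀ v ∈ Z,
      max (u.1 - v.1).natAbs (u.2 - v.2).natAbs ≤ m → ξ0 v ≠ 2)
    (PR3 : ∀ C : Finset (ℤ × ℤ), (∀ v ∈ C, v ∈ Z) → ConnectedIn C →
      (∀ v ∈ C, ∃ t : ℕ, (mstepIn Z)^[t] (initZ ξ0) v = 2) →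
      ∀ u ∈ C, ∀ v ∈ C, 2 * max (u.1 - v.1).natAbs (u.2 - v.2).natAbs ≤ m)
    (s : ℕ) (u : ℤ × ℤ) (hu : u ∈ Z)
    (IHt : ∀ t' < s + 1, ∀ u ∈ Z, mstep^[t'] ξ0 u = 2 → (mstepIn Z)^[t'] (initZ ξ0) u = 2)
    (wout : ℤ × ℤ) (hwoutZ : wout ∉ Z) (hwoutm : wout ∈ neighbors u)
    (v0 : ℤ × ℤ) (hv0m : v0 ∈ neighbors u) (hv0Z : v0 ∈ Z)
    (hv02 : mstep^[s] ξ0 v0 = 2) {P : Prop} : P := by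
  exfalso
  obtain ⟨l, hl, hc, hlast⟩ := path_lemma ξ0 Z PR1 s v0 hv0Z hv02
  set z := (v0 :: l).getLast (by simp) with hz
  have hzmem : z ∈ v0 :: l := List.getLast_mem _
  have hzZ : z ∈ Z := (hl z hzmem).1
  -- PR3 applied to the path
  have hC : ∀ v ∈ (v0 :: l).toFinset, v ∈ Z := fun v hv => (hl v (List.mem_toFinset.1 hv)).1
  have hEv : ∀ v ∈ (v0 :: l).toFinset, ∃ t : ℕ, (mstepIn Z)^[t] (initZ ξ0) v = 2 := by
    intro v hv
    exact ⟨s, IHt s (Nat.lt_succ_self s) v (hC v hv) (hl v (List.mem_toFinset.1 hv)).2⟩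
  have hdiam := PR3 _ hC (connectedIn_of_chain hc) hEv v0 (by simp) z (List.mem_toFinset.2 hzmem)
  -- PR2: z is far from u
  have hfar : ¬ (max (u.1 - z.1).natAbs (u.2 - z.2).natAbs ≤ m) := by
    intro hle
    exact PR2 u hu ⟨wout, hwoutm, hwoutZ⟩ z hzZ hle hlast
  have htri := tri u v0 z
  have hd1 := dist_le_one hv0m
  omega
/-- Protected-region comparison: under (PR1) (among any two `Zᶜ`-neighbors of a vertex of
`Z`, at least one remains in state 0 forever in the full dynamics), (PR2) (no initial 2
within `ℓ∞`-distance `m` in `Z` of a boundary vertex of `Z`) and (PR3) (the internal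
dynamics on `Z` started with 0s replaced by 1s produces no connected state-2 set of
`ℓ∞`-diameter `> m/2`), any vertex of `Z` that is in state 2 at time `t` in the full
modified dynamics is also in state 2 at time `t` in the internal dynamics. -/
theorem stmt19 (m : ℕ) (hm : 1 ≤ m) (ξ0 : ℤ × ℤ → Fin 3)
    (Z : Finset (ℤ × ℤ)) (hZ : Z.Nonempty)
    (PR1 : ∀ u ∈ Z, ∀ w1 ∈ neighbors u, ∀ w2 ∈ neighbors u, w1 ≠ w2 →
      w1 ∉ Z → w2 ∉ Z →
      (∀ t : ℕ, mstep^[t] ξ0 w1 = 0) ∨ (∀ t : ℕ, mstep^[t] ξ0 w2 = 0))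
    (PR2 : ∀ u ∈ Z, (∃ w ∈ neighbors u, w ∉ Z) → ∀ v ∈ Z,
      max (u.1 - v.1).natAbs (u.2 - v.2).natAbs ≤ m → ξ0 v ≠ 2)
    (PR3 : ∀ C : Finset (ℤ × ℤ), (∀ v ∈ C, v ∈ Z) → ConnectedIn C →
      (∀ v ∈ C, ∃ t : ℕ, (mstepIn Z)^[t] (initZ ξ0) v = 2) →
      ∀ u ∈ C, ∀ v ∈ C, 2 * max (u.1 - v.1).natAbs (u.2 - v.2).natAbs ≤ m) :
    ∀ t : ℕ, ∀ u ∈ Z, mstep^[t] ξ0 u = 2 → (mstepIn Z)^[t] (initZ ξ0) u = 2 := by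
  intro t
  induction t using Nat.strong_induction_on with
  | _ t IHt =>
    intro u hu h2
    match t with
    | 0 =>
      have h0 : ξ0 u = 2 := by simpa using h2
      simp only [Function.iterate_zero_apply, initZ, h0]
      decide
    | s + 1 =>
      rw [Function.iterate_succ_apply'] at h2 ⊢
      rcases fin3 (mstep^[s] ξ0 u) with hx0 | hx1 | hx2
      · exfalso
        rw [mstep, if_pos hx0] at h2
        revert h2; split <;> decide
      · -- inner state at time s
        rcases fin3 ((mstepIn Z)^[s] (initZ ξ0) u) with hi0 | hi1 | hi2
        · exact absurd hi0 (internal_ne_zero Z ξ0 s u)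
        · -- get two distinct full-2 neighbors
          rw [mstep, if_neg (by rw [hx1]; decide), if_pos hx1] at h2
          have hcount : 2 ≤ (neighbors u).countP (fun w => decide (mstep^[s] ξ0 w = 2)) := by
            by_contra hc
            rw [if_neg hc] at h2
            exact absurd h2 (by decide)
          obtain ⟨w1, hw1m, w2, hw2m, hne, hp1, hp2⟩ := exists_two (neighbors_nodup u) hcount
          have hx1' : mstep^[s] ξ0 w1 = 2 := by simpa using hp1
          have hx2' : mstep^[s] ξ0 w2 = 2 := by simpa using hp2
          by_cases hz1 : w1 ∈ Z
          · by_cases hz2 : w2 ∈ Z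
            · -- both in Z: internal dynamics fires
              have hi1' : (mstepIn Z)^[s] (initZ ξ0) w1 = 2 := IHt s (Nat.lt_succ_self s) w1 hz1 hx1'
              have hi2' : (mstepIn Z)^[s] (initZ ξ0) w2 = 2 := IHt s (Nat.lt_succ_self s) w2 hz2 hx2'
              rw [mstepIn, if_neg (by rw [hi1]; decide), if_pos hi1, if_pos]
              exact two_le_countP hw1m hw2m hne (by simp [hz1, hi1']) (by simp [hz2, hi2'])
            · exact boundary_contra m hm ξ0 Z PR1 PR2 PR3 s u hu IHt w2 hz2 hw2m w1 hw1m hz1 hx1'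
          · -- w1 outside Z
            by_cases hz2 : w2 ∈ Z
            · exact boundary_contra m hm ξ0 Z PR1 PR2 PR3 s u hu IHt w1 hz1 hw1m w2 hw2m hz2 hx2'
            · exfalso
              rcases PR1 u hu w1 hw1m w2 hw2m hne hz1 hz2 with h0' | h0'
              · rw [h0' s] at hx1'; exact absurd hx1' (by decide)
              · rw [h0' s] at hx2'; exact absurd hx2' (by decide)
        · exact mstepIn_persist hi2
      · have := IHt s (Nat.lt_succ_self s) u hu hx2
        exact mstepIn_persist this
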